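/- arXiv:1307.2720 — 3 statements merged into one kernel-verified Lean document; each statement's English description precedes it below -/
import Mathlib

section
/- Let α : ℝ → ℝ³ be a twice continuously differentiable unit-speed curve with unit tangent T(s) = α′(s), curvature κ(s) = ‖α″(s)‖ > 0, principal normal N(s) = α″(s)/κ(s), and binormal B(s) = T(s) × N(s). Let θ ∈ ℝ with 1 + 2 sin θ cos² θ > 0, and suppose a ∈ ℝ³ satisfies a = cos θ · T(s) + sin θ · B(s) for all s. For s₀ ∈ ℝ define ᾱ(s) = α(s₀) + sin θ · α(s) + (s − s₀) cos θ · a. Then the unit tangent of ᾱ satisfies, for every s, ᾱ′(s)/‖ᾱ′(s)‖ = [(sin θ + cos² θ) T(s) + sin θ cos θ · B(s)] / √(1 + 2 sin θ cos² θ). -/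
open Real

noncomputable def cross3 (u v : EuclideanSpace ℝ (Fin 3)) : EuclideanSpace ℝ (Fin 3) :=
  WithLp.toLp 2 ![u 1 * v 2 - u 2 * v 1, u 2 * v 0 - u 0 * v 2, u 0 * v 1 - u 1 * v 0]

lemma inner_cross_self' (u v : EuclideanSpace ℝ (Fin 3)) :
    inner ℝ u (cross3 u v) = (0 : ℝ) := by
  simp [cross3, PiLp.inner_apply, Fin.sum_univ_three, RCLike.inner_apply]
  ring

lemma inner_cross_cross' (u v : EuclideanSpace ℝ (Fin 3)) :
    (inner ℝ (cross3 u v) (cross3 u v) : ℝ) =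
      (inner ℝ u u : ℝ) * (inner ℝ v v : ℝ) - (inner ℝ u v : ℝ) ^ 2 := by
  simp [-real_inner_self_eq_norm_sq, EuclideanSpace.norm_sq_eq, sq_abs, cross3, PiLp.inner_apply, Fin.sum_univ_three, RCLike.inner_apply]
  ring

theorem unit_tangent_of_associated_curve
    (α : ℝ → EuclideanSpace ℝ (Fin 3))
    (hα : ContDiff ℝ 2 α)
    (T N B : ℝ → EuclideanSpace ℝ (Fin 3)) (κ : ℝ → ℝ)
    (hT : ∀ s, T s = deriv α s)
    (hunit : ∀ s, ‖deriv α s‖ = 1)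
    (hκ : ∀ s, κ s = ‖deriv (deriv α) s‖)
    (hκpos : ∀ s, 0 < κ s)
    (hN : ∀ s, N s = (κ s)⁻¹ • deriv (deriv α) s)
    (hB : ∀ s, B s = cross3 (T s) (N s))
    (θ : ℝ)
    (hθ : 0 < 1 + 2 * Real.sin θ * Real.cos θ ^ 2)
    (a : EuclideanSpace ℝ (Fin 3))
    (ha : ∀ s, a = Real.cos θ • T s + Real.sin θ • B s)
    (s₀ : ℝ)
    (ᾱ : ℝ → EuclideanSpace ℝ (Fin 3))
    (hᾱ : ∀ s, ᾱ s = α s₀ + Real.sin θ • α s + ((s - s₀) * Real.cos θ) • a) :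
    ∀ s, ‖deriv ᾱ s‖⁻¹ • deriv ᾱ s =
      (Real.sqrt (1 + 2 * Real.sin θ * Real.cos θ ^ 2))⁻¹ •
        ((Real.sin θ + Real.cos θ ^ 2) • T s + (Real.sin θ * Real.cos θ) • B s) := by
  intro s
  have hd1 : Differentiable ℝ α := hα.differentiable (by norm_num)
  have hd2 : Differentiable ℝ (deriv α) := by
    have hα' : ContDiff ℝ ((1:ℕ∞)+1) α := by convert hα using 1; norm_num
    exact (contDiff_succ_iff_deriv.mp hα').2.2.differentiable one_ne_zero
  -- orthogonality of T and α''
  have horth : (inner ℝ (deriv α s) (deriv (deriv α) s) : ℝ) = 0 := by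
    have h1 : HasDerivAt (fun t => (inner ℝ (deriv α t) (deriv α t) : ℝ))
        ((inner ℝ (deriv α s) (deriv (deriv α) s) : ℝ) +
          inner ℝ (deriv (deriv α) s) (deriv α s)) s :=
      ((hd2 s).hasDerivAt).inner ℝ ((hd2 s).hasDerivAt)
    have h2 : (fun t => (inner ℝ (deriv α t) (deriv α t) : ℝ)) = fun _ => (1:ℝ) := by
      funext t; rw [real_inner_self_eq_norm_sq, hunit t]; norm_num
    rw [h2] at h1
    have h3 := (hasDerivAt_const s (1:ℝ)).unique h1
    have h4 := real_inner_comm (deriv (deriv α) s) (deriv α s)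
    linarith
  -- basic inner products
  have hTT : (inner ℝ (T s) (T s) : ℝ) = 1 := by
    rw [hT, real_inner_self_eq_norm_sq, hunit]; norm_num
  have hTN : (inner ℝ (T s) (N s) : ℝ) = 0 := by
    rw [hT, hN, real_inner_smul_right, horth, mul_zero]
  have hNN : (inner ℝ (N s) (N s) : ℝ) = 1 := by
    rw [hN, real_inner_smul_left, real_inner_smul_right, real_inner_self_eq_norm_sq, ← hκ]
    field_simp [(hκpos s).ne']
  have hTB : (inner ℝ (T s) (B s) : ℝ) = 0 := by rw [hB]; exact inner_cross_self' _ _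
  have hBB : (inner ℝ (B s) (B s) : ℝ) = 1 := by
    rw [hB, inner_cross_cross', hTT, hNN, hTN]; norm_num
  -- derivative of ᾱ
  set c1 := Real.sin θ + Real.cos θ ^ 2 with hc1
  set c2 := Real.sin θ * Real.cos θ with hc2
  have hderiv : deriv ᾱ s = c1 • T s + c2 • B s := by
    have hfun : ᾱ = fun t => α s₀ + Real.sin θ • α t + ((t - s₀) * Real.cos θ) • a :=
      funext hᾱ
    have hda : HasDerivAt (fun t => α s₀ + Real.sin θ • α t + ((t - s₀) * Real.cos θ) • a)
        (Real.sin θ • deriv α s + (1 * Real.cos θ) • a) s := by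
      have := ((hasDerivAt_const s (α s₀)).add (((hd1 s).hasDerivAt).const_smul
        (Real.sin θ))).add ((((hasDerivAt_id s).sub_const s₀).mul_const (Real.cos θ)).smul_const a)
      rw [← zero_add (Real.sin θ • deriv α s)]; exact this
    rw [hfun, hda.deriv, one_mul, ha s, ← hT s]
    rw [smul_add, smul_smul, smul_smul, hc1, hc2]
    module
  -- norm of the derivative
  have hnorm : ‖deriv ᾱ s‖ = Real.sqrt (1 + 2 * Real.sin θ * Real.cos θ ^ 2) := by
    have hsq : ‖deriv ᾱ s‖ ^ 2 = 1 + 2 * Real.sin θ * Real.cos θ ^ 2 := by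
      rw [← real_inner_self_eq_norm_sq, hderiv]
      rw [inner_add_add_self]
      simp only [real_inner_smul_left, real_inner_smul_right]
      have hBT : (inner ℝ (B s) (T s) : ℝ) = 0 := by rw [real_inner_comm]; exact hTB
      simp only [hTT, hTB, hBT, hBB, hc1, hc2]
      nlinarith [sin_sq_add_cos_sq θ]
    rw [← hsq, Real.sqrt_sq (norm_nonneg _)]
  rw [hnorm, hderiv]
end

section
/- (Theorem 1) Let α : ℝ → ℝ³ be a twice continuously differentiable unit-speed general helix: there is a unit vector a and an angle θ ∈ ℝ with ⟪a, α′(s)⟫ = cos θ for all s, and assume 1 + 2 sin θ cos² θ > 0. For s₀ ∈ ℝ define ᾱ(s) = α(s₀) + sin θ · α(s) + (s − s₀) cos θ · a. Then ᾱ is also a general helix with axis a: for every s, ⟪a, ᾱ′(s)/‖ᾱ′(s)‖⟫ = cos θ (1 + sin θ)/√(1 + 2 sin θ cos² θ), a constant independent of s. -/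
open Real RealInnerProductSpace

theorem associated_curve_is_general_helix
    (α : ℝ → EuclideanSpace ℝ (Fin 3))
    (hα : ContDiff ℝ 2 α)
    (hunit : ∀ s, ‖deriv α s‖ = 1)
    (a : EuclideanSpace ℝ (Fin 3)) (θ : ℝ)
    (ha : ‖a‖ = 1)
    (haxis : ∀ s, ⟪a, deriv α s⟫ = Real.cos θ)
    (hθ : 0 < 1 + 2 * Real.sin θ * Real.cos θ ^ 2)
    (s₀ : ℝ)
    (ᾱ : ℝ → EuclideanSpace ℝ (Fin 3))
    (hᾱ : ∀ s, ᾱ s = α s₀ + Real.sin θ • α s + ((s - s₀) * Real.cos θ) • a) :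
    ∀ s, ⟪a, ‖deriv ᾱ s‖⁻¹ • deriv ᾱ s⟫ =
      Real.cos θ * (1 + Real.sin θ) / Real.sqrt (1 + 2 * Real.sin θ * Real.cos θ ^ 2) := by
  intro s
  have hdiff : Differentiable ℝ α := hα.differentiable (by norm_num)
  have hd : HasDerivAt ᾱ (Real.sin θ • deriv α s + Real.cos θ • a) s := by
    have h1 : HasDerivAt (fun t => Real.sin θ • α t) (Real.sin θ • deriv α s) s :=
      ((hdiff s).hasDerivAt).const_smul (Real.sin θ)
    have h2 : HasDerivAt (fun t : ℝ => ((t - s₀) * Real.cos θ) • a) (Real.cos θ • a) s := by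
      have : HasDerivAt (fun t : ℝ => (t - s₀) * Real.cos θ) (Real.cos θ) s := by
        simpa using ((hasDerivAt_id s).sub_const s₀).mul_const (Real.cos θ)
      simpa using this.smul_const a
    have := (h1.add h2).const_add (α s₀)
    exact this.congr_of_eventuallyEq (Filter.Eventually.of_forall fun t => by
      rw [hᾱ t, add_assoc]; rfl)
  have hder : deriv ᾱ s = Real.sin θ • deriv α s + Real.cos θ • a := hd.deriv
  have hinner : ⟪a, deriv ᾱ s⟫ = Real.cos θ * (1 + Real.sin θ) := by
    rw [hder, inner_add_right, real_inner_smul_right, real_inner_smul_right, haxis,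
      real_inner_self_eq_norm_sq, ha]
    ring
  have hnormsq : ⟪deriv ᾱ s, deriv ᾱ s⟫ = 1 + 2 * Real.sin θ * Real.cos θ ^ 2 := by
    rw [hder]
    simp only [inner_add_right, inner_add_left, real_inner_smul_right, real_inner_smul_left,
      real_inner_comm a (deriv α s), haxis]
    rw [real_inner_self_eq_norm_sq, real_inner_self_eq_norm_sq, hunit, ha]
    have := sin_sq_add_cos_sq θ
    nlinarith []
  have hnorm : ‖deriv ᾱ s‖ = Real.sqrt (1 + 2 * Real.sin θ * Real.cos θ ^ 2) := by
    rw [← Real.sqrt_sq (norm_nonneg _), ← real_inner_self_eq_norm_sq, hnormsq]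
  rw [real_inner_smul_right, hinner, hnorm]
  ring
end

section
/- Let α : ℝ → ℝ³ be a twice continuously differentiable unit-speed curve with unit tangent T(s) = α′(s), curvature κ(s) = ‖α″(s)‖ > 0, principal normal N(s) = α″(s)/κ(s), and binormal B(s) = T(s) × N(s). Let θ ∈ ℝ with sin θ > 0, and suppose a ∈ ℝ³ satisfies a = cos θ · T(s) + sin θ · B(s) for all s. For s₀ ∈ ℝ define ᾱ(s) = α(s₀) + sin θ · α(s) + (s − s₀) cos θ · a. Then the binormal of ᾱ, defined by B̄(s) = (ᾱ′(s) × ᾱ″(s))/‖ᾱ′(s) × ᾱ″(s)‖, satisfies for every s: B̄(s) = [−sin θ cos θ · T(s) + (sin θ + cos² θ) B(s)] / √(1 + 2 sin θ cos² θ). -/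
open Real

open scoped RealInnerProductSpace

lemma inner3 (x y : EuclideanSpace ℝ (Fin 3)) :
    ⟪x, y⟫ = x 0 * y 0 + x 1 * y 1 + x 2 * y 2 := by
  simp [PiLp.inner_apply, RCLike.inner_apply, Fin.sum_univ_three]
  ring

theorem binormal_of_associated_curve
    (α : ℝ → EuclideanSpace ℝ (Fin 3))
    (hα : ContDiff ℝ 2 α)
    (T N B : ℝ → EuclideanSpace ℝ (Fin 3)) (κ : ℝ → ℝ)
    (hT : ∀ s, T s = deriv α s)
    (hunit : ∀ s, ‖deriv α s‖ = 1)
    (hκ : ∀ s, κ s = ‖deriv (deriv α) s‖)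
    (hκpos : ∀ s, 0 < κ s)
    (hN : ∀ s, N s = (κ s)⁻¹ • deriv (deriv α) s)
    (hB : ∀ s, B s = cross3 (T s) (N s))
    (θ : ℝ) (hθ : 0 < Real.sin θ)
    (a : EuclideanSpace ℝ (Fin 3))
    (ha : ∀ s, a = Real.cos θ • T s + Real.sin θ • B s)
    (s₀ : ℝ)
    (ᾱ : ℝ → EuclideanSpace ℝ (Fin 3))
    (hᾱ : ∀ s, ᾱ s = α s₀ + Real.sin θ • α s + ((s - s₀) * Real.cos θ) • a)
    (B' : ℝ → EuclideanSpace ℝ (Fin 3))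
    (hB' : ∀ s, B' s = ‖cross3 (deriv ᾱ s) (deriv (deriv ᾱ) s)‖⁻¹ •
        cross3 (deriv ᾱ s) (deriv (deriv ᾱ) s)) :
    ∀ s, B' s =
      (Real.sqrt (1 + 2 * Real.sin θ * Real.cos θ ^ 2))⁻¹ •
        ((-(Real.sin θ * Real.cos θ)) • T s + (Real.sin θ + Real.cos θ ^ 2) • B s) := by
  have h2 : (2 : WithTop ℕ∞) = 1 + 1 := by norm_num
  have hα1 : Differentiable ℝ α := hα.differentiable (by norm_num)
  have hαd : ContDiff ℝ 1 (deriv α) := by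
    rw [h2, contDiff_succ_iff_deriv] at hα
    exact hα.2.2
  have hα2 : Differentiable ℝ (deriv α) := hαd.differentiable one_ne_zero
  set c := Real.sin θ with hcdef
  set d := Real.cos θ with hddef
  -- first derivative of ᾱ
  have hd1 : ∀ s, HasDerivAt ᾱ (c • deriv α s + d • a) s := by
    intro s
    have h1 : HasDerivAt (fun s => α s₀ + c • α s + ((s - s₀) * d) • a)
        (c • deriv α s + d • a) s := by
      have hA : HasDerivAt (fun s => α s₀ + c • α s) (c • deriv α s) s :=
        (((hα1 s).hasDerivAt).const_smul c).const_add (α s₀)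
      have hB2 : HasDerivAt (fun s : ℝ => ((s - s₀) * d) • a) (d • a) s := by
        have h3 : HasDerivAt (fun s : ℝ => (s - s₀) * d) d s := by
          simpa using ((hasDerivAt_id s).sub_const s₀).mul_const d
        simpa using h3.smul_const a
      exact hA.add hB2
    exact h1.congr_of_eventuallyEq (Filter.Eventually.of_forall fun t => hᾱ t)
  have e1 : ∀ s, deriv ᾱ s = c • deriv α s + d • a := fun s => (hd1 s).deriv
  -- second derivative
  have hd2 : ∀ s, HasDerivAt (deriv ᾱ) (c • deriv (deriv α) s) s := by
    intro s
    have h1 : HasDerivAt (fun s => c • deriv α s + d • a)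
        (c • deriv (deriv α) s) s :=
      (((hα2 s).hasDerivAt).const_smul c).add_const (d • a)
    exact h1.congr_of_eventuallyEq (Filter.Eventually.of_forall fun t => e1 t)
  -- orthogonality of T and N
  have hinner : ∀ s, ⟪deriv α s, deriv (deriv α) s⟫ = 0 := by
    intro s
    have h1 : HasDerivAt (fun t => ⟪deriv α t, deriv α t⟫)
        (⟪deriv α s, deriv (deriv α) s⟫ + ⟪deriv (deriv α) s, deriv α s⟫) s :=
      HasDerivAt.inner ℝ ((hα2 s).hasDerivAt) ((hα2 s).hasDerivAt)
    have h2' : (fun t => ⟪deriv α t, deriv α t⟫) = fun _ => (1 : ℝ) := by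
      funext t
      rw [real_inner_self_eq_norm_sq, hunit t]; norm_num
    rw [h2'] at h1
    have h3 := h1.unique (hasDerivAt_const s 1)
    have h4 := real_inner_comm (deriv α s) (deriv (deriv α) s)
    linarith
  intro s
  have hk : (0 : ℝ) < κ s := hκpos s
  -- scalar coordinate facts
  have huu : T s 0 ^ 2 + T s 1 ^ 2 + T s 2 ^ 2 = 1 := by
    have := real_inner_self_eq_norm_sq (T s)
    rw [inner3, hT s, hunit s] at this
    rw [hT s]; nlinarith [this]
  have hNnorm : ‖N s‖ = 1 := by
    rw [hN s, norm_smul, ← hκ s, Real.norm_eq_abs, abs_of_pos (inv_pos.mpr hk),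
      inv_mul_cancel₀ hk.ne']
  have hvv : N s 0 ^ 2 + N s 1 ^ 2 + N s 2 ^ 2 = 1 := by
    have := real_inner_self_eq_norm_sq (N s)
    rw [inner3, hNnorm] at this
    nlinarith [this]
  have huv : T s 0 * N s 0 + T s 1 * N s 1 + T s 2 * N s 2 = 0 := by
    have h1 : ⟪T s, N s⟫ = 0 := by
      rw [hT s, hN s, real_inner_smul_right, hinner s, mul_zero]
    rw [inner3] at h1; exact h1
  have hpyth : c ^ 2 + d ^ 2 = 1 := sin_sq_add_cos_sq θ
  -- express derivatives of ᾱ in the frame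
  have e1' : deriv ᾱ s = (c + d ^ 2) • T s + (c * d) • cross3 (T s) (N s) := by
    rw [e1 s, ha s, ← hB s, ← hT s]
    module
  have e2 : deriv (deriv ᾱ) s = (c * κ s) • N s := by
    rw [(hd2 s).deriv, hN s, smul_smul]
    congr 1
    field_simp
  -- the cross product
  have ecross : cross3 (deriv ᾱ s) (deriv (deriv ᾱ) s)
      = (c * κ s) • ((-(c * d)) • T s + (c + d ^ 2) • cross3 (T s) (N s)) := by
    rw [e1', e2]
    ext i
    fin_cases i <;>
      simp [cross3, PiLp.smul_apply, PiLp.add_apply, smul_eq_mul]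
    · linear_combination (c * κ s * c * d * N s 0) * huv - (c * κ s * c * d * T s 0) * hvv
    · linear_combination (c * κ s * c * d * N s 1) * huv - (c * κ s * c * d * T s 1) * hvv
    · linear_combination (c * κ s * c * d * N s 2) * huv - (c * κ s * c * d * T s 2) * hvv
  set z : EuclideanSpace ℝ (Fin 3) :=
    (-(c * d)) • T s + (c + d ^ 2) • cross3 (T s) (N s) with hzdef
  have hz2 : ⟪z, z⟫ = 1 + 2 * c * d ^ 2 := by
    rw [inner3]
    simp [hzdef, cross3, PiLp.smul_apply, PiLp.add_apply, smul_eq_mul]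
    linear_combination
      ((c * d) ^ 2 + (c + d ^ 2) ^ 2 * (N s 0 ^ 2 + N s 1 ^ 2 + N s 2 ^ 2)) * huu
      + (c + d ^ 2) ^ 2 * hvv
      - (c + d ^ 2) ^ 2 * (T s 0 * N s 0 + T s 1 * N s 1 + T s 2 * N s 2) * huv
      + (d ^ 2 + 1) * hpyth
  have hpos : (0 : ℝ) < 1 + 2 * c * d ^ 2 := by nlinarith [sq_nonneg d, hθ]
  have hznorm : ‖z‖ = Real.sqrt (1 + 2 * c * d ^ 2) := by
    rw [norm_eq_sqrt_real_inner, hz2]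
  have hck : (0 : ℝ) < c * κ s := mul_pos hθ hk
  rw [hB' s, ecross, hB s]
  rw [norm_smul, Real.norm_eq_abs, abs_of_pos hck, ← hzdef, hznorm, smul_smul,
    mul_inv_rev, mul_assoc, inv_mul_cancel₀ hck.ne', mul_one]
end
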